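/- Let k ~ Binomial(n, p) and s = ⌈n·p⌉. Then the mean absolute deviation satisfies E[|p − k/n|] = (2/n)·s·C(n,s)·p^s·(1−p)^{n−s+1}, where C(n,s) is the binomial coefficient. -/

import Mathlib

open MeasureTheory ProbabilityTheory
open scoped NNReal ENNReal

theorem binomial_mean_deviation (n : ℕ) (hn : 0 < n) (p : ℝ) (hp0 : 0 ≤ p) (hp1 : p ≤ 1) :
    ∑ k ∈ Finset.range (n + 1),
        (n.choose k : ℝ) * p ^ k * (1 - p) ^ (n - k) * |p - (k : ℝ) / n|
      = (2 / n) * (⌈(n : ℝ) * p⌉₊ : ℝ) * (n.choose ⌈(n : ℝ) * p⌉₊ : ℝ)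
        * p ^ (⌈(n : ℝ) * p⌉₊) * (1 - p) ^ (n - ⌈(n : ℝ) * p⌉₊ + 1) := by
  have hnR : (0:ℝ) < n := Nat.cast_pos.mpr hn
  set s : ℕ := ⌈(n : ℝ) * p⌉₊ with hsdef
  have hsn : s ≤ n := Nat.ceil_le.mpr (by nlinarith)
  set g : ℕ → ℝ := fun k => k * (n.choose k) * p ^ k * (1 - p) ^ (n + 1 - k) with hg
  have tele : ∀ k, k ≤ n →
      (n.choose k : ℝ) * p ^ k * (1 - p) ^ (n - k) * ((n:ℝ) * p - k) = g (k+1) - g k := by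
    intro k hk
    have hch : ((n.choose (k+1) : ℝ)) * ((k:ℝ)+1) = (n.choose k : ℝ) * ((n:ℝ) - k) := by
      have h := Nat.choose_succ_right_eq n k
      have h2 : ((n.choose (k+1) * (k+1) : ℕ) : ℝ) = ((n.choose k * (n - k) : ℕ) : ℝ) := by
        exact_mod_cast congrArg (Nat.cast : ℕ → ℝ) h
      push_cast [Nat.cast_sub hk] at h2
      linarith
    simp only [hg]
    have e1 : n + 1 - (k+1) = n - k := by omega
    have e2 : n + 1 - k = (n - k) + 1 := by omega
    rw [e1, e2]
    push_cast
    linear_combination (-(p^(k+1) * (1-p)^(n-k))) * hch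
  have hsum : ∀ m, m ≤ n + 1 → ∑ k ∈ Finset.range m,
      (n.choose k : ℝ) * p ^ k * (1 - p) ^ (n - k) * ((n:ℝ) * p - k) = g m := by
    intro m hm
    rw [Finset.sum_congr rfl (fun k hk => tele k (by
      have := Finset.mem_range.mp hk; omega)), Finset.sum_range_sub g]
    simp [hg]
  have hall : ∑ k ∈ Finset.range (n+1),
      (n.choose k : ℝ) * p ^ k * (1 - p) ^ (n - k) * ((n:ℝ) * p - k) = 0 := by
    rw [hsum (n+1) le_rfl]
    simp [hg, Nat.choose_eq_zero_of_lt (Nat.lt_succ_self n)]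
  have hS : ∑ k ∈ Finset.range (n+1),
      (n.choose k : ℝ) * p ^ k * (1 - p) ^ (n - k) * |(n:ℝ) * p - k| = 2 * g s := by
    rw [Finset.range_eq_Ico, ← Finset.sum_Ico_consecutive _ (Nat.zero_le s)
      (by omega : s ≤ n+1)]
    have h1 : ∑ k ∈ Finset.Ico 0 s,
        (n.choose k : ℝ) * p ^ k * (1 - p) ^ (n - k) * |(n:ℝ) * p - k| = g s := by
      rw [← Finset.range_eq_Ico, ← hsum s (by omega)]
      refine Finset.sum_congr rfl fun k hk => ?_
      have hks : (k:ℝ) < (n:ℝ) * p := Nat.lt_ceil.mp (Finset.mem_range.mp hk)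
      rw [abs_of_nonneg (by linarith)]
    have h2 : ∑ k ∈ Finset.Ico s (n+1),
        (n.choose k : ℝ) * p ^ k * (1 - p) ^ (n - k) * |(n:ℝ) * p - k| = g s := by
      have h3 : ∑ k ∈ Finset.Ico s (n+1),
          (n.choose k : ℝ) * p ^ k * (1 - p) ^ (n - k) * ((n:ℝ) * p - k) = -g s := by
        have h4 := Finset.sum_Ico_eq_sub
          (fun k => (n.choose k : ℝ) * p ^ k * (1 - p) ^ (n - k) * ((n:ℝ) * p - k))
          (by omega : s ≤ n+1)
        rw [h4, hall, hsum s (by omega)]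
        ring
      have h5 : ∀ k ∈ Finset.Ico s (n+1),
          (n.choose k : ℝ) * p ^ k * (1 - p) ^ (n - k) * |(n:ℝ) * p - k|
          = -((n.choose k : ℝ) * p ^ k * (1 - p) ^ (n - k) * ((n:ℝ) * p - k)) := by
        intro k hk
        have hsk : s ≤ k := (Finset.mem_Ico.mp hk).1
        have : (n:ℝ) * p ≤ k := le_trans (Nat.le_ceil _) (by exact_mod_cast hsk)
        rw [abs_of_nonpos (by linarith)]
        ring
      rw [Finset.sum_congr rfl h5, Finset.sum_neg_distrib, h3, neg_neg]
    rw [h1, h2]; ring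
  have habs : ∀ k : ℕ, |p - (k:ℝ)/n| = |(n:ℝ)*p - k| / n := by
    intro k
    rw [show p - (k:ℝ)/n = ((n:ℝ)*p - k)/n by field_simp, abs_div, abs_of_pos hnR]
  calc ∑ k ∈ Finset.range (n + 1),
        (n.choose k : ℝ) * p ^ k * (1 - p) ^ (n - k) * |p - (k : ℝ) / n|
      = (∑ k ∈ Finset.range (n+1),
        (n.choose k : ℝ) * p ^ k * (1 - p) ^ (n - k) * |(n:ℝ) * p - k|) / n := by
        rw [Finset.sum_div]
        exact Finset.sum_congr rfl fun k _ => by rw [habs k, mul_div_assoc]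
    _ = 2 * g s / n := by rw [hS]
    _ = (2 / n) * (s : ℝ) * (n.choose s : ℝ) * p ^ s * (1 - p) ^ (n - s + 1) := by
        simp only [hg]
        rw [show n + 1 - s = n - s + 1 by omega]
        ring
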